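/- Let P = [[A,B],[C,D]] ∈ Sp(2k) and suppose the k×k symmetric matrix AᵀC has a positive definite subspace of dimension q. Then for all ε with |ε| sufficiently small, the symmetric matrix M_ε(P) has at least q negative eigenvalues; hence (1/2)·sgn M_ε(P) ≤ k − q. -/

import Mathlib

open Matrix BigOperators

noncomputable section

/-- The standard symplectic matrix `J = [[0, -I],[I, 0]]`. -/
def Jmat (ι : Type*) [Fintype ι] [DecidableEq ι] : Matrix (ι ⊕ ι) (ι ⊕ ι) ℝ :=
  Matrix.fromBlocks 0 (-1) 1 0

/-- `M` is symplectic iff `Mᵀ J M = J`. -/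
def IsSymplectic {ι : Type*} [Fintype ι] [DecidableEq ι]
    (M : Matrix (ι ⊕ ι) (ι ⊕ ι) ℝ) : Prop :=
  Mᵀ * Jmat ι * M = Jmat ι

/-- The matrix `M_ε(P)`. -/
def Mmat {ι : Type*} [Fintype ι] [DecidableEq ι] (ε : ℝ)
    (P : Matrix (ι ⊕ ι) (ι ⊕ ι) ℝ) : Matrix (ι ⊕ ι) (ι ⊕ ι) ℝ :=
  Pᵀ * Matrix.fromBlocks (Real.sin (2*ε) • 1) (-(Real.cos (2*ε)) • 1)
      (-(Real.cos (2*ε)) • 1) (-(Real.sin (2*ε)) • 1) * P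
    + Matrix.fromBlocks (Real.sin (2*ε) • 1) (Real.cos (2*ε) • 1)
      (Real.cos (2*ε) • 1) (-(Real.sin (2*ε)) • 1)

/-- `N = diag(-I, I)`. -/
def Nmat (ι : Type*) [Fintype ι] [DecidableEq ι] : Matrix (ι ⊕ ι) (ι ⊕ ι) ℝ :=
  Matrix.fromBlocks (-1) 0 0 1

/-- `m⁺(F)`: dimension of a maximal subspace on which the quadratic form of `F`
is positive definite. -/
def posDim {ι : Type*} [Fintype ι] (F : Matrix ι ι ℝ) : ℕ :=
  sSup {d : ℕ | ∃ W : Submodule ℝ (ι → ℝ), Module.finrank ℝ W = d ∧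
    ∀ v ∈ W, v ≠ 0 → 0 < F.mulVec v ⬝ᵥ v}

/-- `m⁻(F)`: dimension of a maximal subspace on which the quadratic form of `F`
is negative definite. -/
def negDim {ι : Type*} [Fintype ι] (F : Matrix ι ι ℝ) : ℕ :=
  sSup {d : ℕ | ∃ W : Submodule ℝ (ι → ℝ), Module.finrank ℝ W = d ∧
    ∀ v ∈ W, v ≠ 0 → F.mulVec v ⬝ᵥ v < 0}

/-- The signature `sgn F = m⁺(F) - m⁻(F)`. -/
def signat {ι : Type*} [Fintype ι] (F : Matrix ι ι ℝ) : ℤ :=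
  (posDim F : ℤ) - (negDim F : ℤ)

/-- The `⋄`-product (symplectic direct sum) of two matrices. -/
def diamond {ι₁ ι₂ : Type*}
    (M₁ : Matrix (ι₁ ⊕ ι₁) (ι₁ ⊕ ι₁) ℝ) (M₂ : Matrix (ι₂ ⊕ ι₂) (ι₂ ⊕ ι₂) ℝ) :
    Matrix ((ι₁ ⊕ ι₂) ⊕ (ι₁ ⊕ ι₂)) ((ι₁ ⊕ ι₂) ⊕ (ι₁ ⊕ ι₂)) ℝ :=
  Matrix.fromBlocks
    (Matrix.fromBlocks (M₁.submatrix Sum.inl Sum.inl) 0 0 (M₂.submatrix Sum.inl Sum.inl))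
    (Matrix.fromBlocks (M₁.submatrix Sum.inl Sum.inr) 0 0 (M₂.submatrix Sum.inl Sum.inr))
    (Matrix.fromBlocks (M₁.submatrix Sum.inr Sum.inl) 0 0 (M₂.submatrix Sum.inr Sum.inl))
    (Matrix.fromBlocks (M₁.submatrix Sum.inr Sum.inr) 0 0 (M₂.submatrix Sum.inr Sum.inr))

end


section Aux

open Matrix Module

lemma transpose_mulVec_dot {n m : Type*} [Fintype n] [Fintype m]
    (M : Matrix n m ℝ) (u : n → ℝ) (v : m → ℝ) :
    (Mᵀ.mulVec u) ⬝ᵥ v = u ⬝ᵥ M.mulVec v := by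
  rw [Matrix.mulVec_transpose, ← Matrix.dotProduct_mulVec]

lemma quad_eval {k : ℕ} (ε : ℝ) (A B C D : Matrix (Fin k) (Fin k) ℝ) (x : Fin k → ℝ) :
    (Mmat ε (Matrix.fromBlocks A B C D)).mulVec (Sum.elim x 0) ⬝ᵥ (Sum.elim x 0)
      = Real.sin (2*ε) * ((A.mulVec x ⬝ᵥ A.mulVec x) - (C.mulVec x ⬝ᵥ C.mulVec x) + x ⬝ᵥ x)
        - 2 * Real.cos (2*ε) * (A.mulVec x ⬝ᵥ C.mulVec x) := by
  set P := Matrix.fromBlocks A B C D with hP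
  set w : (Fin k) ⊕ (Fin k) → ℝ := Sum.elim x 0 with hw
  have key : ∀ (N : Matrix ((Fin k) ⊕ (Fin k)) ((Fin k) ⊕ (Fin k)) ℝ),
      ((Pᵀ * N * P).mulVec w) ⬝ᵥ w = N.mulVec (P.mulVec w) ⬝ᵥ (P.mulVec w) := by
    intro N
    rw [← Matrix.mulVec_mulVec, ← Matrix.mulVec_mulVec, transpose_mulVec_dot,
      dotProduct_comm]
  have hPw : P.mulVec w = Sum.elim (A.mulVec x) (C.mulVec x) := by
    rw [hP, hw, Matrix.fromBlocks_mulVec]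
    simp
  rw [Mmat, Matrix.add_mulVec, add_dotProduct, key, hPw]
  rw [hw]
  simp only [Matrix.fromBlocks_mulVec, Matrix.smul_mulVec, Matrix.one_mulVec,
    Matrix.mulVec_zero, smul_zero, add_zero, sumElim_dotProduct_sumElim,
    smul_dotProduct, add_dotProduct, smul_eq_mul, smul_dotProduct,
    dotProduct_smul, zero_dotProduct, dotProduct_zero,
    Sum.elim_comp_inl, Sum.elim_comp_inr]
  ring_nf
  rw [dotProduct_comm (C.mulVec x) (A.mulVec x)]
  ring

/-- The embedding `x ↦ (x, 0)`. -/
def Lemb (k : ℕ) : (Fin k → ℝ) →ₗ[ℝ] ((Fin k) ⊕ (Fin k) → ℝ) where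
  toFun x := Sum.elim x 0
  map_add' x y := by funext i; cases i <;> simp
  map_smul' c x := by funext i; cases i <;> simp

lemma Lemb_injective (k : ℕ) : Function.Injective (Lemb k) := by
  intro x y hxy
  funext i
  exact congrFun hxy (Sum.inl i)

lemma dim_set_bddAbove {ι : Type*} [Fintype ι] (p : (ι → ℝ) → Prop) :
    BddAbove {d : ℕ | ∃ W : Submodule ℝ (ι → ℝ), Module.finrank ℝ W = d ∧
      ∀ v ∈ W, v ≠ 0 → p v} := by
  refine ⟨Fintype.card ι, ?_⟩
  rintro d ⟨W, hW, -⟩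
  rw [← hW]
  calc finrank ℝ W ≤ finrank ℝ (ι → ℝ) := Submodule.finrank_le W
    _ = Fintype.card ι := by simp [Module.finrank_pi]

lemma dim_set_nonempty {ι : Type*} [Fintype ι] (p : (ι → ℝ) → Prop) :
    Set.Nonempty {d : ℕ | ∃ W : Submodule ℝ (ι → ℝ), Module.finrank ℝ W = d ∧
      ∀ v ∈ W, v ≠ 0 → p v} := by
  refine ⟨0, ⊥, finrank_bot ℝ _, ?_⟩
  intro v hv hv0
  exact absurd hv hv0

lemma dotProduct_self_nonneg' {ι : Type*} [Fintype ι] (x : ι → ℝ) : 0 ≤ x ⬝ᵥ x :=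
  Finset.sum_nonneg fun i _ => mul_self_nonneg (x i)

/-- negDim is at least the dimension of any negative subspace. -/
lemma le_negDim {ι : Type*} [Fintype ι] (F : Matrix ι ι ℝ) (V : Submodule ℝ (ι → ℝ))
    (hV : ∀ v ∈ V, v ≠ 0 → F.mulVec v ⬝ᵥ v < 0) :
    Module.finrank ℝ V ≤ negDim F :=
  le_csSup (dim_set_bddAbove _) ⟨V, rfl, hV⟩

/-- posDim is bounded using any negative subspace. -/
lemma posDim_add_le {ι : Type*} [Fintype ι] (F : Matrix ι ι ℝ) (V : Submodule ℝ (ι → ℝ))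
    (hV : ∀ v ∈ V, v ≠ 0 → F.mulVec v ⬝ᵥ v < 0) :
    posDim F + Module.finrank ℝ V ≤ Fintype.card ι := by
  have hb : ∀ d ∈ {d : ℕ | ∃ W : Submodule ℝ (ι → ℝ), Module.finrank ℝ W = d ∧
      ∀ v ∈ W, v ≠ 0 → 0 < F.mulVec v ⬝ᵥ v}, d ≤ Fintype.card ι - Module.finrank ℝ V := by
    rintro d ⟨U, hU, hUpos⟩
    have hdisj : U ⊓ V = ⊥ := by
      rw [Submodule.eq_bot_iff]
      intro v hv
      by_contra hv0
      exact absurd (hV v hv.2 hv0) (not_lt.mpr (hUpos v hv.1 hv0).le)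
    have := Submodule.finrank_sup_add_finrank_inf_eq U V
    rw [hdisj] at this
    simp only [finrank_bot, add_zero] at this
    have hle : finrank ℝ ↥(U ⊔ V) ≤ Fintype.card ι := by
      calc finrank ℝ ↥(U ⊔ V) ≤ finrank ℝ (ι → ℝ) := Submodule.finrank_le _
        _ = Fintype.card ι := by simp [Module.finrank_pi]
    omega
  have h1 : posDim F ≤ Fintype.card ι - Module.finrank ℝ V :=
    csSup_le (dim_set_nonempty _) hb
  have h2 : Module.finrank ℝ V ≤ Fintype.card ι := by
    calc finrank ℝ V ≤ finrank ℝ (ι → ℝ) := Submodule.finrank_le V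
      _ = Fintype.card ι := by simp [Module.finrank_pi]
  omega

end Aux

section Core
open Matrix Module

lemma core_neg {k : ℕ} (A C : Matrix (Fin k) (Fin k) ℝ) (W : Submodule ℝ (Fin k → ℝ))
    (hpos : ∀ x ∈ W, x ≠ 0 → 0 < A.mulVec x ⬝ᵥ C.mulVec x) :
    ∃ ε₀ > 0, ∀ ε : ℝ, |ε| < ε₀ → ∀ x ∈ W, x ≠ 0 →
      Real.sin (2*ε) * ((A.mulVec x ⬝ᵥ A.mulVec x) - (C.mulVec x ⬝ᵥ C.mulVec x) + x ⬝ᵥ x)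
        - 2 * Real.cos (2*ε) * (A.mulVec x ⬝ᵥ C.mulVec x) < 0 := by
  classical
  set f : (Fin k → ℝ) → ℝ := fun x => A.mulVec x ⬝ᵥ C.mulVec x with hf_def
  set g : (Fin k → ℝ) → ℝ := fun x =>
    (A.mulVec x ⬝ᵥ A.mulVec x) - (C.mulVec x ⬝ᵥ C.mulVec x) + x ⬝ᵥ x with hg_def
  by_cases htriv : ∀ x ∈ W, x = 0
  · exact ⟨1, one_pos, fun ε _ x hxW hx0 => absurd (htriv x hxW) hx0⟩
  push_neg at htriv
  obtain ⟨x₀, hx₀W, hx₀⟩ := htriv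
  -- continuity
  have hf : Continuous f :=
    (continuous_const.matrix_mulVec continuous_id).dotProduct
      (continuous_const.matrix_mulVec continuous_id)
  have hg : Continuous g := by
    apply Continuous.add
    apply Continuous.sub
    · exact (continuous_const.matrix_mulVec continuous_id).dotProduct
        (continuous_const.matrix_mulVec continuous_id)
    · exact (continuous_const.matrix_mulVec continuous_id).dotProduct
        (continuous_const.matrix_mulVec continuous_id)
    · exact continuous_id.dotProduct continuous_id
  -- scaling
  have hfs : ∀ (c : ℝ) (x : Fin k → ℝ), f (c • x) = c^2 * f x := by
    intro c x
    simp only [hf_def, Matrix.mulVec_smul, smul_dotProduct, dotProduct_smul,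
      smul_eq_mul]
    ring
  have hgs : ∀ (c : ℝ) (x : Fin k → ℝ), g (c • x) = c^2 * g x := by
    intro c x
    simp only [hg_def, Matrix.mulVec_smul, smul_dotProduct, dotProduct_smul,
      smul_eq_mul]
    ring
  -- the "sphere" in W
  set S : Set (Fin k → ℝ) := {x | x ∈ W ∧ x ⬝ᵥ x = 1} with hS_def
  have hS_ne0 : ∀ x ∈ S, x ≠ 0 := by
    rintro x ⟨-, hx1⟩ rfl
    simp [zero_dotProduct] at hx1
  -- normalization
  have hnormalize : ∀ x ∈ W, x ≠ 0 →
      0 < x ⬝ᵥ x ∧ ((Real.sqrt (x ⬝ᵥ x))⁻¹ • x) ∈ S ∧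
        x = Real.sqrt (x ⬝ᵥ x) • ((Real.sqrt (x ⬝ᵥ x))⁻¹ • x) := by
    intro x hxW hx0
    have hr : 0 < x ⬝ᵥ x :=
      lt_of_le_of_ne (dotProduct_self_nonneg' x)
        (Ne.symm (fun h => hx0 (dotProduct_self_eq_zero.mp h)))
    have hsq : Real.sqrt (x ⬝ᵥ x) ^ 2 = x ⬝ᵥ x := Real.sq_sqrt hr.le
    have hsqpos : 0 < Real.sqrt (x ⬝ᵥ x) := Real.sqrt_pos.mpr hr
    refine ⟨hr, ⟨Submodule.smul_mem W _ hxW, ?_⟩, ?_⟩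
    · simp only [smul_dotProduct, dotProduct_smul, smul_eq_mul]
      field_simp
      exact hsq.symm
    · rw [smul_smul, mul_inv_cancel₀ hsqpos.ne', one_smul]
  have hSc : IsCompact S := by
    apply Metric.isCompact_of_isClosed_isBounded
    · exact (Submodule.closed_of_finiteDimensional W).inter
        (isClosed_eq (continuous_id.dotProduct continuous_id) continuous_const)
    · apply Bornology.IsBounded.subset (Metric.isBounded_closedBall (x := (0 : Fin k → ℝ)) (r := 1))
      rintro x ⟨-, hx1⟩
      rw [Metric.mem_closedBall, dist_zero_right]
      apply pi_norm_le_iff_of_nonneg zero_le_one |>.mpr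
      intro i
      have h1 : x i * x i ≤ x ⬝ᵥ x := by
        apply Finset.single_le_sum (f := fun j => x j * x j)
          (fun j _ => mul_self_nonneg (x j)) (Finset.mem_univ i)
      rw [hx1] at h1
      rw [Real.norm_eq_abs]
      nlinarith [abs_nonneg (x i), sq_abs (x i)]
  have hSne : S.Nonempty := ⟨_, (hnormalize x₀ hx₀W hx₀).2.1⟩
  obtain ⟨xm, hxmS, hxm⟩ := hSc.exists_isMinOn hSne hf.continuousOn
  obtain ⟨xM, hxMS, hxM⟩ := hSc.exists_isMaxOn hSne (hg.abs.continuousOn)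
  set δ : ℝ := f xm with hδ_def
  set K : ℝ := |g xM| with hK_def
  have hδpos : 0 < δ := hpos xm hxmS.1 (hS_ne0 xm hxmS)
  have hKnn : 0 ≤ K := abs_nonneg _
  refine ⟨min (1/4) (δ / (2*K + 2)), lt_min (by norm_num) (by positivity), ?_⟩
  intro ε hε x hxW hx0
  show Real.sin (2*ε) * g x - 2 * Real.cos (2*ε) * f x < 0
  obtain ⟨hr, huS, hxu⟩ := hnormalize x hxW hx0
  set r : ℝ := x ⬝ᵥ x with hr_def
  set u : Fin k → ℝ := (Real.sqrt r)⁻¹ • x with hu_def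
  have hsq : Real.sqrt r ^ 2 = r := Real.sq_sqrt hr.le
  have hfx : f x = r * f u := by
    conv_lhs => rw [hxu]
    rw [hfs, hsq]
  have hgx : g x = r * g u := by
    conv_lhs => rw [hxu]
    rw [hgs, hsq]
  have hfu : δ ≤ f u := hxm huS
  have hgu : |g u| ≤ K := hxM huS
  -- trig bounds
  have hε4 : |ε| < 1/4 := lt_of_lt_of_le hε (min_le_left _ _)
  have hεδ : |ε| < δ / (2*K + 2) := lt_of_lt_of_le hε (min_le_right _ _)
  have hsin : |Real.sin (2*ε)| ≤ 2 * |ε| := by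
    have := Real.abs_sin_le_abs (x := 2*ε)
    rwa [abs_mul, abs_two] at this
  have hcos : (1:ℝ)/2 ≤ Real.cos (2*ε) := by
    have h1 : 1 - (2*ε)^2/2 ≤ Real.cos (2*ε) := Real.one_sub_sq_div_two_le_cos
    nlinarith [sq_abs ε, abs_nonneg ε]
  have heps : 2 * |ε| * K < δ := by
    have h2 : |ε| * (2*K + 2) < δ := by
      rw [← lt_div_iff₀ (by positivity)]
      exact hεδ
    nlinarith [abs_nonneg ε]
  -- final estimate
  have e1 : Real.sin (2*ε) * g x ≤ 2 * |ε| * K * r := by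
    calc Real.sin (2*ε) * g x ≤ |Real.sin (2*ε) * g x| := le_abs_self _
      _ = |Real.sin (2*ε)| * |g x| := abs_mul _ _
      _ = |Real.sin (2*ε)| * (r * |g u|) := by rw [hgx, abs_mul, abs_of_pos hr]
      _ ≤ (2 * |ε|) * (r * K) := by
          apply mul_le_mul hsin _ (by positivity) (by positivity)
          exact mul_le_mul_of_nonneg_left hgu hr.le
      _ = 2 * |ε| * K * r := by ring
  have hfxpos : r * δ ≤ f x := by
    rw [hfx]
    exact mul_le_mul_of_nonneg_left hfu hr.le
  have e2 : r * δ ≤ 2 * Real.cos (2*ε) * f x := by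
    have hfx0 : 0 < f x := lt_of_lt_of_le (by positivity) hfxpos
    nlinarith [hfx0, hfxpos, hcos]
  have : 2 * |ε| * K * r < r * δ := by
    calc 2 * |ε| * K * r = r * (2 * |ε| * K) := by ring
      _ < r * δ := by exact mul_lt_mul_of_pos_left heps hr
  linarith [e1, e2, this]

end Core

/-- If `AᵀC` is positive definite on a subspace of dimension `q`, then for `|ε|`
small `m⁻(M_ε(P)) ≥ q`, hence `(1/2) sgn M_ε(P) ≤ k - q`. -/
theorem neg_index_ge_posdef_dim {k q : ℕ} (A B C D : Matrix (Fin k) (Fin k) ℝ)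
    (h : IsSymplectic (Matrix.fromBlocks A B C D))
    (W : Submodule ℝ (Fin k → ℝ)) (hW : Module.finrank ℝ W = q)
    (hpos : ∀ x ∈ W, x ≠ 0 → 0 < (Aᵀ * C).mulVec x ⬝ᵥ x) :
    ∃ ε₀ > 0, ∀ ε : ℝ, |ε| < ε₀ →
      q ≤ negDim (Mmat ε (Matrix.fromBlocks A B C D)) ∧
      signat (Mmat ε (Matrix.fromBlocks A B C D)) ≤ 2 * ((k : ℤ) - q) := by
  have hfC : ∀ x : Fin k → ℝ, (Aᵀ * C).mulVec x ⬝ᵥ x = A.mulVec x ⬝ᵥ C.mulVec x := by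
    intro x
    rw [← Matrix.mulVec_mulVec, transpose_mulVec_dot, dotProduct_comm]
  obtain ⟨ε₀, hε₀, hcore⟩ := core_neg A C W
    (fun x hx h0 => by rw [← hfC]; exact hpos x hx h0)
  refine ⟨ε₀, hε₀, fun ε hε => ?_⟩
  set M := Mmat ε (Matrix.fromBlocks A B C D) with hM
  set V : Submodule ℝ ((Fin k) ⊕ (Fin k) → ℝ) := W.map (Lemb k) with hV
  have hVrank : Module.finrank ℝ V = q := by
    rw [← hW]
    exact ((Submodule.equivMapOfInjective (Lemb k) (Lemb_injective k) W).finrank_eq).symm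
  have hVneg : ∀ v ∈ V, v ≠ 0 → M.mulVec v ⬝ᵥ v < 0 := by
    rintro v ⟨x, hxW, rfl⟩ hv0
    have hx0 : x ≠ 0 := fun hx => hv0 (by rw [hx]; exact map_zero _)
    have hval := hcore ε hε x hxW hx0
    have heval := quad_eval ε A B C D x
    show M.mulVec (Sum.elim x 0) ⬝ᵥ (Sum.elim x 0) < 0
    rw [hM, heval]
    exact hval
  have hcard : Fintype.card ((Fin k) ⊕ (Fin k)) = 2 * k := by
    simp [Fintype.card_sum, Fintype.card_fin, two_mul]
  constructor
  · rw [← hVrank]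
    exact le_negDim M V hVneg
  · have h1 := posDim_add_le M V hVneg
    have h2 := le_negDim M V hVneg
    rw [hVrank] at h1 h2
    rw [hcard] at h1
    show (posDim M : ℤ) - (negDim M : ℤ) ≤ 2 * ((k : ℤ) - q)
    omega
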